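/- Let X be a set and f : X → X a map such that, for every positive integer n, the set Fix(f^n) of fixed points of the n-th iterate of f is finite. Then the sequence (|Fix(f^n)|)_{n≥1} satisfies Gauss congruences for every prime: for every prime number p, every integer m ≥ 1 and every integer s ≥ 0, one has |Fix(f^{m p^{s+1}})| ≡ |Fix(f^{m p^s})| (mod p^{s+1}). -/

import Mathlib

open Function MulAction

/-- Auxiliary counting lemma: if a permutation `σ` of a finite type `A` satisfies
`σ ^ (p ^ (s+1)) = 1` for a prime `p`, then `p ^ (s+1)` divides the difference between
`|A|` and the number of points fixed by `σ ^ (p ^ s)`. -/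
lemma perm_pow_gauss_aux {A : Type*} [Fintype A] [DecidableEq A] (σ : Equiv.Perm A)
    (p s : ℕ) (hp : p.Prime) (hσ : σ ^ (p ^ (s + 1)) = 1) :
    ((p : ℤ) ^ (s + 1)) ∣
      ((Fintype.card A : ℤ) -
        ((Finset.univ.filter (fun a => (σ ^ p ^ s) a = a)).card : ℤ)) := by
  classical
  set G := Subgroup.zpowers σ with hG
  letI : Fintype (orbitRel.Quotient G A) := Fintype.ofFinite _
  set Q := orbitRel.Quotient G A with hQ
  set T : Finset A := Finset.univ.filter (fun a => (σ ^ p ^ s) a = a) with hT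
  -- commuting fact
  have comm : ∀ (g : G) (a : A), (σ ^ p ^ s) ((g : Equiv.Perm A) a) =
      (g : Equiv.Perm A) ((σ ^ p ^ s) a) := by
    intro g a
    obtain ⟨k, hk⟩ := g.2
    have hc : Commute (σ ^ p ^ s) (g : Equiv.Perm A) := by
      rw [← hk]
      exact (Commute.refl σ).pow_left _ |>.zpow_right _
    calc (σ ^ p ^ s) ((g : Equiv.Perm A) a) = ((σ ^ p ^ s) * (g : Equiv.Perm A)) a := rfl
      _ = ((g : Equiv.Perm A) * (σ ^ p ^ s)) a := by rw [hc.eq]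
      _ = (g : Equiv.Perm A) ((σ ^ p ^ s) a) := rfl
  -- within an orbit, being fixed by σ^{p^s} is constant
  have key : ∀ (a b : A), a ∈ orbit G b → ((σ ^ p ^ s) b = b → (σ ^ p ^ s) a = a) := by
    rintro a b ⟨g, rfl⟩ hb
    show (σ ^ p ^ s) ((g : Equiv.Perm A) b) = _
    rw [comm, hb]
    rfl
  have h1 : (Finset.univ : Finset A).card =
      ∑ q : Q, (Finset.univ.filter (fun a => (Quotient.mk'' a : Q) = q)).card :=
    Finset.card_eq_sum_card_fiberwise (fun a _ => Finset.mem_univ _)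
  have h2 : T.card = ∑ q : Q, (T.filter (fun a => (Quotient.mk'' a : Q) = q)).card :=
    Finset.card_eq_sum_card_fiberwise (fun a _ => Finset.mem_univ _)
  have hcard : (Fintype.card A : ℤ) - (T.card : ℤ) =
      ∑ q : Q, (((Finset.univ.filter (fun a => (Quotient.mk'' a : Q) = q)).card : ℤ) -
        ((T.filter (fun a => (Quotient.mk'' a : Q) = q)).card : ℤ)) := by
    rw [Finset.sum_sub_distrib]
    rw [← Finset.card_univ, h1, h2]
    push_cast
    ring
  rw [hcard]
  apply Finset.dvd_sum
  intro q _
  set b : A := Quotient.out q with hb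
  have hmem : ∀ a : A, (Quotient.mk'' a : Q) = q ↔ a ∈ orbit G b := by
    intro a
    rw [← orbitRel.Quotient.mem_orbit, orbitRel.Quotient.orbit_eq_orbit_out q Quotient.out_eq']
  by_cases hfix : (σ ^ p ^ s) b = b
  · -- fibers coincide
    have : T.filter (fun a => (Quotient.mk'' a : Q) = q) =
        Finset.univ.filter (fun a => (Quotient.mk'' a : Q) = q) := by
      ext a
      simp only [hT, Finset.mem_filter, Finset.mem_univ, true_and]
      constructor
      · rintro ⟨-, h⟩; exact h
      · intro h
        refine ⟨?_, h⟩
        exact key a b ((hmem a).mp h) hfix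
    rw [this, sub_self]
    exact dvd_zero _
  · -- fiber of T is empty, fiber of univ has card p^(s+1)
    have hTq : T.filter (fun a => (Quotient.mk'' a : Q) = q) = ∅ := by
      rw [Finset.filter_eq_empty_iff]
      rintro a ha
      simp only [hT, Finset.mem_filter, Finset.mem_univ, true_and] at ha
      intro hq
      obtain ⟨g, rfl⟩ := (hmem a).mp hq
      apply hfix
      have : (g : Equiv.Perm A) ((σ ^ p ^ s) b) = (g : Equiv.Perm A) b := by
        rw [← comm]; exact ha
      exact (g : Equiv.Perm A).injective this
    have horbcard : (Finset.univ.filter (fun a => (Quotient.mk'' a : Q) = q)).card =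
        Fintype.card (orbit G b) := by
      rw [← Fintype.card_subtype]
      apply Fintype.card_congr
      exact Equiv.subtypeEquivRight fun a => hmem a
    have hsmul : (σ • · : A → A) = ⇑σ := rfl
    have hmp : Fintype.card (orbit G b) = Function.minimalPeriod (⇑σ) b := by
      rw [hG, ← minimalPeriod_eq_card, hsmul]
    set d := Function.minimalPeriod (⇑σ) b with hd
    have hdvd : d ∣ p ^ (s + 1) := by
      apply Function.IsPeriodicPt.minimalPeriod_dvd
      show (⇑σ)^[p ^ (s + 1)] b = b
      rw [Equiv.Perm.iterate_eq_pow, hσ]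
      rfl
    have hndvd : ¬ d ∣ p ^ s := by
      intro h
      apply hfix
      exact Function.isPeriodicPt_iff_minimalPeriod_dvd.mpr h
    obtain ⟨i, hi, hdi⟩ := (Nat.dvd_prime_pow hp).mp hdvd
    have hieq : i = s + 1 := by
      rcases Nat.lt_or_ge i (s + 1) with h | h
      · exact absurd (hdi ▸ pow_dvd_pow p (Nat.lt_succ_iff.mp h)) hndvd
      · omega
    rw [hTq, horbcard, hmp, hdi, hieq]
    simp

/-- If every iterate of `f : X → X` has finitely many fixed points, then the sequence
`(|Fix(fⁿ)|)_{n≥1}` satisfies Gauss congruences for every prime: for every prime `p`,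
every `m ≥ 1` and every `s ≥ 0`, `|Fix(f^{m p^{s+1}})| ≡ |Fix(f^{m p^s})| (mod p^{s+1})`. -/
theorem fixed_points_gauss_congruences
    (X : Type*) (f : X → X)
    (hfin : ∀ n : ℕ, 0 < n → {x : X | f^[n] x = x}.Finite)
    (p : ℕ) (hp : p.Prime) (m : ℕ) (hm : 1 ≤ m) (s : ℕ) :
    ((p : ℤ) ^ (s + 1)) ∣
      ((Nat.card {x : X // f^[m * p ^ (s + 1)] x = x} : ℤ) -
       (Nat.card {x : X // f^[m * p ^ s] x = x} : ℤ)) := by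
  classical
  have hppos : 0 < p := hp.pos
  have hpos1 : 0 < m * p ^ (s + 1) := Nat.mul_pos hm (pow_pos hppos _)
  set A := {x : X // f^[m * p ^ (s + 1)] x = x} with hA
  have hfinA : Finite A := (hfin _ hpos1).to_subtype
  letI : Fintype A := Fintype.ofFinite _
  have hsucc : m * p ^ (s + 1) = m * p ^ s * p := by rw [pow_succ, mul_assoc]
  have hup : ∀ x : X, f^[m * p ^ s] x = x → f^[m * p ^ (s + 1)] x = x := by
    intro x hx
    have : (f^[m * p ^ s])^[p] x = x := Function.IsFixedPt.iterate hx p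
    rwa [hsucc, Function.iterate_mul]
  -- the induced map on A
  have Fmem : ∀ a : A, f^[m * p ^ (s + 1)] (f^[m] a.1) = f^[m] a.1 := by
    intro a
    rw [← Function.iterate_add_apply, Nat.add_comm, Function.iterate_add_apply, a.2]
  set F : A → A := fun a => ⟨f^[m] a.1, Fmem a⟩ with hF
  have hFiter : ∀ (k : ℕ) (a : A), (F^[k] a).1 = f^[m * k] a.1 := by
    intro k
    induction k with
    | zero => intro a; simp
    | succ n ih =>
        intro a
        rw [Function.iterate_succ_apply']
        show f^[m] ((F^[n] a).1) = _
        rw [ih a, ← Function.iterate_add_apply]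
        congr 1
        ring
  have hFix : ∀ a : A, F^[p ^ (s + 1)] a = a := by
    intro a
    apply Subtype.ext
    rw [hFiter]
    exact a.2
  have ht1 : p ^ (s + 1) - 1 + 1 = p ^ (s + 1) :=
    Nat.succ_pred_eq_of_pos (pow_pos hppos _)
  set σ : Equiv.Perm A :=
    { toFun := F
      invFun := F^[p ^ (s + 1) - 1]
      left_inv := fun a => by
        have h := hFix a
        rw [← ht1, Function.iterate_succ_apply] at h
        exact h
      right_inv := fun a => by
        have h := hFix a
        rw [← ht1, Function.iterate_succ_apply'] at h
        exact h } with hσ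
  have hσpow : ∀ (k : ℕ) (a : A), (σ ^ k) a = F^[k] a := fun k a => rfl
  have hσ1 : σ ^ (p ^ (s + 1)) = 1 :=
    Equiv.ext fun a => (hσpow _ a).trans (hFix a)
  have e : {x : X // f^[m * p ^ s] x = x} ≃ {a : A // (σ ^ p ^ s) a = a} :=
    { toFun := fun x => ⟨⟨x.1, hup x.1 x.2⟩,
        Subtype.ext (by
          show (F^[p ^ s] (⟨x.1, hup x.1 x.2⟩ : A)).1 = x.1
          rw [hFiter]
          exact x.2)⟩
      invFun := fun a => ⟨a.1.1, by
        have h := congrArg Subtype.val a.2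
        rwa [show ((σ ^ p ^ s) a.1 : A).1 = f^[m * p ^ s] a.1.1 from hFiter (p ^ s) a.1] at h⟩
      left_inv := fun x => rfl
      right_inv := fun a => rfl }
  have h1 : Nat.card {x : X // f^[m * p ^ (s + 1)] x = x} = Fintype.card A :=
    Nat.card_eq_fintype_card
  have h2 : Nat.card {x : X // f^[m * p ^ s] x = x} =
      (Finset.univ.filter (fun a : A => (σ ^ p ^ s) a = a)).card := by
    rw [Nat.card_congr e, Nat.card_eq_fintype_card, Fintype.card_subtype]
  rw [h1, h2]
  exact perm_pow_gauss_aux σ p s hp hσ1
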